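/- If R_z^* > 1, then c < 0 and the quadratic equation a R² + b R + c = 0 has exactly one positive real root, namely R* = (−b + √(b² − 4ac))/(2a). -/

import Mathlib

theorem zikv_quadratic_unique_positive_root
    (Lam bz bm am Lm mu mum muz dz : ℝ)
    (hLam : 0 < Lam) (hbz : 0 < bz) (hbm : 0 < bm) (ham : 0 < am) (hLm : 0 < Lm)
    (hmu : 0 < mu) (hmum : 0 < mum) (hmuz : 0 < muz) (hdz : 0 < dz)
    (κ1 Rz1 Rz2bar Rzstar Rmax a b c : ℝ)
    (hκ1 : κ1 = muz + dz + mu)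
    (hRz1 : Rz1 = bz * Lam / (2 * mu * κ1))
    (hRz2bar : Rz2bar = bm * am * Lm * Lam / (mu * mum ^ 2 * κ1))
    (hRzstar : Rzstar = 2 * Rz1 + Rz2bar)
    (hRmax : Rmax = Lam / mu * (dz / κ1))
    (ha : a = bz * Lam * am * mu / (dz * Rmax))
    (hb : b = mu * κ1 / dz * (bm * am * Lm / mum + bz * mum + am * mu * (1 - 2 * Rz1)))
    (hc : c = κ1 * mu * mum * (1 - Rzstar))
    (h : 1 < Rzstar) :
    c < 0 ∧
      0 < (-b + Real.sqrt (b ^ 2 - 4 * a * c)) / (2 * a) ∧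
      a * ((-b + Real.sqrt (b ^ 2 - 4 * a * c)) / (2 * a)) ^ 2 +
        b * ((-b + Real.sqrt (b ^ 2 - 4 * a * c)) / (2 * a)) + c = 0 ∧
      ∀ R : ℝ, 0 < R → a * R ^ 2 + b * R + c = 0 →
        R = (-b + Real.sqrt (b ^ 2 - 4 * a * c)) / (2 * a) := by

  have hκ : 0 < κ1 := by rw [hκ1]; positivity
  have hRm : 0 < Rmax := by rw [hRmax]; positivity
  have ha' : 0 < a := by rw [ha]; positivity
  have hc' : c < 0 := by
    rw [hc]; nlinarith [mul_pos (mul_pos hκ hmu) hmum]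
  set s := Real.sqrt (b ^ 2 - 4 * a * c) with hsdef
  have hd : 0 < b ^ 2 - 4 * a * c := by nlinarith
  have hs2 : s ^ 2 = b ^ 2 - 4 * a * c := Real.sq_sqrt hd.le
  have hsnn : 0 ≤ s := Real.sqrt_nonneg _
  have hsb : b < s := by nlinarith
  have hsnb : -b < s := by nlinarith
  have h2a : (2 * a) ≠ 0 := by positivity
  have hpos : 0 < (-b + s) / (2 * a) := by
    apply div_pos; linarith; linarith
  have hroot : a * ((-b + s) / (2 * a)) ^ 2 + b * ((-b + s) / (2 * a)) + c = 0 := by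
    field_simp
    linear_combination hs2
  refine ⟨hc', hpos, hroot, ?_⟩
  intro R hR hEq
  have key : (R - (-b + s) / (2 * a)) * (a * (R + (-b + s) / (2 * a)) + b) = 0 := by
    linear_combination hEq - hroot
  rcases mul_eq_zero.mp key with h1 | h2
  · linarith
  · exfalso
    have har : a * ((-b + s) / (2 * a)) = (-b + s) / 2 := by
      field_simp
    have h3 : a * R + (-b + s) / 2 + b = 0 := by linear_combination h2 - har
    linarith [mul_pos ha' hR]
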